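/- For all finite connected simple graphs G and H, the strong product satisfies μ(G ⊠ H) ≥ μ(G)·μ(H); moreover, if S_G is a mutual-visibility set of G and S_H is a mutual-visibility set of H, then S_G × S_H is a mutual-visibility set of G ⊠ H. -/

import Mathlib

open SimpleGraph

/-- Vertices `x` and `y` are `X`-visible in `G`: some shortest `x,y`-path has
no internal vertex in `X`. -/
def Visible {V : Type*} (G : SimpleGraph V) (X : Set V) (x y : V) : Prop :=
  ∃ p : G.Walk x y, p.length = G.dist x y ∧ ∀ v ∈ p.support, v ∈ X → v = x ∨ v = y

/-- `X` is a mutual-visibility set of `G`: every two vertices of `X` are `X`-visible. -/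
def IsMVSet {V : Type*} (G : SimpleGraph V) (X : Set V) : Prop :=
  ∀ x ∈ X, ∀ y ∈ X, Visible G X x y

/-- `X` is a total mutual-visibility set of `G`: every two vertices of `G` are
`X`-visible. -/
def IsTMVSet {V : Type*} (G : SimpleGraph V) (X : Set V) : Prop :=
  ∀ x y : V, Visible G X x y

/-- The mutual-visibility number of `G`: the maximum cardinality of a
mutual-visibility set. -/
noncomputable def mu {V : Type*} (G : SimpleGraph V) : ℕ :=
  sSup {n | ∃ X : Set V, IsMVSet G X ∧ X.ncard = n}

/-- The total mutual-visibility number of `G`: the maximum cardinality of a total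
mutual-visibility set. -/
noncomputable def muT {V : Type*} (G : SimpleGraph V) : ℕ :=
  sSup {n | ∃ X : Set V, IsTMVSet G X ∧ X.ncard = n}

/-- A feasible total mutual-visibility set: a total mutual-visibility set `S` such that
any two adjacent vertices of `S` have a common neighbor outside `S`. -/
def IsFeasibleTMVSet {V : Type*} (G : SimpleGraph V) (S : Set V) : Prop :=
  IsTMVSet G S ∧ ∀ x ∈ S, ∀ y ∈ S, G.Adj x y → ∃ z ∉ S, G.Adj x z ∧ G.Adj y z

/-- The strong product of two simple graphs. -/
def strongProd {α β : Type*} (G : SimpleGraph α) (H : SimpleGraph β) :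
    SimpleGraph (α × β) where
  Adj x y := (G.Adj x.1 y.1 ∧ x.2 = y.2) ∨ (x.1 = y.1 ∧ H.Adj x.2 y.2) ∨
    (G.Adj x.1 y.1 ∧ H.Adj x.2 y.2)
  symm := by
    constructor
    rintro ⟨a, b⟩ ⟨c, d⟩ (⟨h1, h2⟩ | ⟨h1, h2⟩ | ⟨h1, h2⟩)
    · exact Or.inl ⟨h1.symm, h2.symm⟩
    · exact Or.inr (Or.inl ⟨h1.symm, h2.symm⟩)
    · exact Or.inr (Or.inr ⟨h1.symm, h2.symm⟩)
  loopless := by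
    constructor
    rintro ⟨a, b⟩ (⟨h, _⟩ | ⟨_, h⟩ | ⟨h, _⟩)
    · exact G.irrefl h
    · exact H.irrefl h
    · exact G.irrefl h

/-- The iterated (associative) strong product of a finite family of graphs:
two tuples are adjacent iff they are distinct and agree or are adjacent in every
coordinate. -/
def strongProdPi {k : ℕ} {V : Fin k → Type*} (G : ∀ i, SimpleGraph (V i)) :
    SimpleGraph (∀ i, V i) where
  Adj x y := x ≠ y ∧ ∀ i, x i = y i ∨ (G i).Adj (x i) (y i)
  symm := by
    constructor
    rintro x y ⟨hne, h⟩
    exact ⟨hne.symm, fun i => (h i).imp Eq.symm fun hh => (G i).adj_symm hh⟩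
  loopless := ⟨fun x h => h.1 rfl⟩

/-- A universal vertex: adjacent to all other vertices. -/
def IsUniversal {V : Type*} (G : SimpleGraph V) (v : V) : Prop :=
  ∀ u : V, u ≠ v → G.Adj v u

/-- A cut vertex: its removal disconnects the graph. -/
def IsCutVertex {V : Type*} (G : SimpleGraph V) (v : V) : Prop :=
  ¬ (G.induce ({v}ᶜ : Set V)).Preconnected

/-- An induced path: a path with no chords between its vertices. -/
def IsInducedPath {V : Type*} (G : SimpleGraph V) {u v : V} (p : G.Walk u v) : Prop :=
  p.IsPath ∧ ∀ a b : V, a ∈ p.support → b ∈ p.support → G.Adj a b → s(a, b) ∈ p.edges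

/-- A block graph: a connected graph in which every pair of vertices is joined
by a unique induced path. -/
def IsBlockGraph {V : Type*} (G : SimpleGraph V) : Prop :=
  G.Connected ∧ ∀ u v : V, ∃! p : G.Walk u v, IsInducedPath G p

/-- A convex set of vertices: every shortest path of `G` between two of its
vertices stays inside the set. -/
def IsConvexSet {V : Type*} (G : SimpleGraph V) (A : Set V) : Prop :=
  ∀ x ∈ A, ∀ y ∈ A, ∀ p : G.Walk x y, p.length = G.dist x y → ∀ v ∈ p.support, v ∈ A

/-- A cactus graph: a connected graph in which every edge lies in at most one cycle,
i.e. two cycles sharing an edge have the same edge set. -/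
def IsCactus {V : Type*} (G : SimpleGraph V) : Prop :=
  G.Connected ∧ ∀ (v : V) (p q : G.Walk v v), p.IsCycle → q.IsCycle →
    ∀ e, e ∈ p.edges → e ∈ q.edges → ∀ e', e' ∈ p.edges ↔ e' ∈ q.edges

/-- A cograph: obtained from a single vertex by repeatedly adding twins, i.e. there is
an enumeration of the vertices in which every vertex except the first is, at the
moment of its addition, a (true or false) twin of some earlier vertex in the induced
subgraph on the vertices added so far. -/
def IsCograph {V : Type*} (G : SimpleGraph V) : Prop :=
  ∃ l : List V, l.Nodup ∧ (∀ v : V, v ∈ l) ∧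
    ∀ i : Fin l.length, (i : ℕ) ≠ 0 →
      ∃ j : Fin l.length, (j : ℕ) < (i : ℕ) ∧
        ∀ z ∈ l.take ((i : ℕ) + 1), z ≠ l.get i → z ≠ l.get j →
          (G.Adj (l.get i) z ↔ G.Adj (l.get j) z)

/-- An enabling vertex: a vertex `v` adjacent to every vertex `u` of `G - v` whose
degree in `G - v` is less than `n(G) - 2`. -/
def IsEnabling {V : Type*} [Fintype V] (G : SimpleGraph V) (v : V) : Prop :=
  ∀ u : V, u ≠ v → (G.neighborSet u \ {v}).ncard < Fintype.card V - 2 → G.Adj v u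

section Aux

variable {α β : Type*} {G : SimpleGraph α} {H : SimpleGraph β}

def combineW : ∀ {a a' : α} {b b' : β}, (p : G.Walk a a') → (q : H.Walk b b') →
    p.length ≤ q.length → (strongProd G H).Walk (a, b) (a', b')
  | a, _, b, _, p, .nil, hle =>
      (Walk.nil : (strongProd G H).Walk (a, b) (a, b)).copy rfl
        (by rw [Walk.eq_of_length_eq_zero (Nat.le_zero.mp hle)])
  | a, _, b, b', .nil, @Walk.cons _ _ _ c _ e q', _ =>
      Walk.cons (v := (a, c)) (Or.inr (Or.inl ⟨rfl, e⟩))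
        (combineW Walk.nil q' (Nat.zero_le _))
  | _, a', b, b', @Walk.cons _ _ _ c _ f p', @Walk.cons _ _ _ d _ e q', hle =>
      Walk.cons (v := (c, d)) (Or.inr (Or.inr ⟨f, e⟩))
        (combineW p' q' (Nat.succ_le_succ_iff.mp (by simpa using hle)))

lemma combineW_length : ∀ {a a' : α} {b b' : β} (p : G.Walk a a') (q : H.Walk b b')
    (hle : p.length ≤ q.length), (combineW p q hle).length = q.length
  | _, _, _, _, p, .nil, hle => by
      rw [combineW]; simp
  | _, _, _, _, .nil, .cons e q', _ => by
      rw [combineW]; exact congrArg (· + 1) (combineW_length _ q' _)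
  | _, _, _, _, .cons f p', .cons e q', _ => by
      rw [combineW]; exact congrArg (· + 1) (combineW_length p' q' _)

end Aux

section Aux2
variable {α β : Type*} {G : SimpleGraph α} {H : SimpleGraph β}

lemma combineW_support {SG : Set α} {SH : Set β} {g₀ : α} {h₀ : β} :
    ∀ {a a' : α} {b b' : β} (p : G.Walk a a') (q : H.Walk b b')
      (hle : p.length ≤ q.length),
      q.support.Nodup →
      (∀ y ∈ q.support, y ∈ SH → y = h₀ ∨ y = b') →
      (h₀ ∈ q.support → b = h₀) →
      (b = h₀ → a = g₀) →
      ∀ v ∈ (combineW p q hle).support, v.1 ∈ SG → v.2 ∈ SH →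
        v = (g₀, h₀) ∨ v = (a', b')
  | a, _, b, _, p, .nil, hle, _, _, _, _, v, hv, _, _ => by
      have ha := Walk.eq_of_length_eq_zero (Nat.le_zero.mp hle)
      rw [combineW] at hv
      simp only [Walk.support_copy, Walk.support_nil, List.mem_singleton] at hv
      subst ha
      exact Or.inr hv
  | a, _, b, b', .nil, @Walk.cons _ _ _ d _ e q', hle, hnd, h1, h2, h3, v, hv, hv1, hv2 => by
      rw [Walk.support_cons, List.nodup_cons] at hnd
      have hbq' : b ∉ q'.support := hnd.1
      have hno : h₀ ∉ q'.support := fun hh => by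
        have hb : b = h₀ := h2 (by rw [Walk.support_cons]; exact List.mem_cons_of_mem _ hh)
        exact hbq' (by rw [hb]; exact hh)
      rw [combineW] at hv
      change v ∈ List.cons _ (Walk.support _) at hv
      rcases List.mem_cons.mp hv with hvh | hvt
      · subst hvh
        rcases h1 b (by rw [Walk.support_cons]; exact List.mem_cons_self) hv2 with hb | hb
        · exact Or.inl (by rw [h3 hb, hb])
        · exact absurd (by rw [hb]; exact q'.end_mem_support) hbq'
      · exact combineW_support Walk.nil q' (Nat.zero_le _) hnd.2
          (fun y hy => h1 y (by rw [Walk.support_cons]; exact List.mem_cons_of_mem _ hy))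
          (fun hh => absurd hh hno)
          (fun hd => absurd (hd ▸ q'.start_mem_support) hno) v hvt hv1 hv2
  | _, a', b, b', @Walk.cons _ _ _ c _ f p', @Walk.cons _ _ _ d _ e q', hle, hnd, h1, h2, h3,
      v, hv, hv1, hv2 => by
      rw [Walk.support_cons, List.nodup_cons] at hnd
      have hbq' : b ∉ q'.support := hnd.1
      have hno : h₀ ∉ q'.support := fun hh => by
        have hb : b = h₀ := h2 (by rw [Walk.support_cons]; exact List.mem_cons_of_mem _ hh)
        exact hbq' (by rw [hb]; exact hh)
      rw [combineW] at hv
      change v ∈ List.cons _ (Walk.support _) at hv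
      rcases List.mem_cons.mp hv with hvh | hvt
      · subst hvh
        rcases h1 b (by rw [Walk.support_cons]; exact List.mem_cons_self) hv2 with hb | hb
        · exact Or.inl (by rw [h3 hb, hb])
        · exact absurd (by rw [hb]; exact q'.end_mem_support) hbq'
      · exact combineW_support p' q' _ hnd.2
          (fun y hy => h1 y (by rw [Walk.support_cons]; exact List.mem_cons_of_mem _ hy))
          (fun hh => absurd hh hno)
          (fun hd => absurd (hd ▸ q'.start_mem_support) hno) v hvt hv1 hv2
end Aux2

section Aux3
variable {α β : Type*} {G : SimpleGraph α} {H : SimpleGraph β}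

lemma projFst : ∀ {x y : α × β} (W : (strongProd G H).Walk x y),
    ∃ w : G.Walk x.1 y.1, w.length ≤ W.length
  | _, _, .nil => ⟨.nil, le_refl _⟩
  | x, y, .cons e W' => by
      obtain ⟨w, hw⟩ := projFst W'
      rcases e with ⟨h1, _⟩ | ⟨h1, _⟩ | ⟨h1, _⟩
      · exact ⟨.cons h1 w, Nat.succ_le_succ hw⟩
      · exact ⟨w.copy h1.symm rfl, (Walk.length_copy w _ _).trans_le (Nat.le_succ_of_le hw)⟩
      · exact ⟨.cons h1 w, Nat.succ_le_succ hw⟩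

lemma projSnd : ∀ {x y : α × β} (W : (strongProd G H).Walk x y),
    ∃ w : H.Walk x.2 y.2, w.length ≤ W.length
  | _, _, .nil => ⟨.nil, le_refl _⟩
  | x, y, .cons e W' => by
      obtain ⟨w, hw⟩ := projSnd W'
      rcases e with ⟨_, h2⟩ | ⟨_, h2⟩ | ⟨_, h2⟩
      · exact ⟨w.copy h2.symm rfl, (Walk.length_copy w _ _).trans_le (Nat.le_succ_of_le hw)⟩
      · exact ⟨.cons h2 w, Nat.succ_le_succ hw⟩
      · exact ⟨.cons h2 w, Nat.succ_le_succ hw⟩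

def swapHom (G : SimpleGraph α) (H : SimpleGraph β) : strongProd G H →g strongProd H G where
  toFun := Prod.swap
  map_rel' := by
    rintro ⟨a, b⟩ ⟨c, d⟩ (⟨h1, h2⟩ | ⟨h1, h2⟩ | ⟨h1, h2⟩)
    · exact Or.inr (Or.inl ⟨h2, h1⟩)
    · exact Or.inl ⟨h2, h1⟩
    · exact Or.inr (Or.inr ⟨h2, h1⟩)

lemma dist_swap (x y : α × β) :
    (strongProd H G).dist x.swap y.swap ≤ (strongProd G H).dist x y := by
  by_cases hr : (strongProd G H).Reachable x y
  · obtain ⟨W, hW⟩ := hr.exists_walk_length_eq_dist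
    calc (strongProd H G).dist x.swap y.swap ≤ (W.map (swapHom G H)).length :=
          SimpleGraph.dist_le _
      _ = W.length := Walk.length_map _ W
      _ = _ := hW
  · have hr' : ¬ (strongProd H G).Reachable x.swap y.swap := fun ⟨W⟩ =>
      hr ⟨(W.map (swapHom H G)).copy (Prod.swap_swap x) (Prod.swap_swap y)⟩
    rw [SimpleGraph.dist_eq_zero_of_not_reachable hr,
      SimpleGraph.dist_eq_zero_of_not_reachable hr']

end Aux3

section Aux4
variable {α β : Type*} {G : SimpleGraph α} {H : SimpleGraph β}

lemma visible_prod_of_le {SG : Set α} {SH : Set β} {g g' : α} {h h' : β}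
    (hp : Visible G SG g g') (hq : Visible H SH h h')
    (hle : G.dist g g' ≤ H.dist h h') :
    Visible (strongProd G H) (SG ×ˢ SH) (g, h) (g', h') := by
  obtain ⟨p, hpl, _⟩ := hp
  obtain ⟨q, hql, hqs⟩ := hq
  have hle' : p.length ≤ q.length := by rw [hpl, hql]; exact hle
  refine ⟨combineW p q hle', ?_, ?_⟩
  · have h1 : (strongProd G H).dist (g, h) (g', h') ≤ (combineW p q hle').length :=
      SimpleGraph.dist_le _
    have hr : (strongProd G H).Reachable (g, h) (g', h') := ⟨combineW p q hle'⟩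
    obtain ⟨W, hW⟩ := hr.exists_walk_length_eq_dist
    obtain ⟨w, hw⟩ := projSnd W
    have h2 : q.length ≤ (strongProd G H).dist (g, h) (g', h') := by
      rw [hql]
      calc H.dist h h' ≤ w.length := SimpleGraph.dist_le w
        _ ≤ W.length := hw
        _ = _ := hW
    have h3 := combineW_length p q hle'
    omega
  · intro v hv hvX
    have hnd : q.support.Nodup := (q.isPath_of_length_eq_dist hql).support_nodup
    exact combineW_support p q hle' hnd hqs (fun _ => rfl) (fun _ => rfl) v hv hvX.1 hvX.2

lemma visible_swap {SG : Set α} {SH : Set β} {g g' : α} {h h' : β}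
    (hv : Visible (strongProd H G) (SH ×ˢ SG) (h, g) (h', g')) :
    Visible (strongProd G H) (SG ×ˢ SH) (g, h) (g', h') := by
  obtain ⟨W, hWl, hWs⟩ := hv
  have hd : (strongProd H G).dist (h, g) (h', g') = (strongProd G H).dist (g, h) (g', h') :=
    le_antisymm (dist_swap (G := G) (H := H) (g, h) (g', h')) (dist_swap (G := H) (H := G) (h, g) (h', g'))
  refine ⟨W.map (swapHom H G), ?_, ?_⟩
  · exact (Walk.length_map _ W).trans (hWl.trans hd)
  · intro v hv hvX
    replace hv : v ∈ W.support.map (swapHom H G) := by rw [← Walk.support_map]; exact hv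
    rw [List.mem_map] at hv
    obtain ⟨u, hu, huv⟩ := hv
    obtain ⟨u1, u2⟩ := u
    obtain rfl : (u2, u1) = v := huv
    rcases hWs (u1, u2) hu ⟨hvX.2, hvX.1⟩ with h | h <;>
      [left; right] <;> rw [Prod.mk.injEq] at h ⊢ <;> exact ⟨h.2, h.1⟩

lemma mvset_prod {SG : Set α} {SH : Set β} (hSG : IsMVSet G SG) (hSH : IsMVSet H SH) :
    IsMVSet (strongProd G H) (SG ×ˢ SH) := by
  rintro ⟨g, h⟩ ⟨hg, hh⟩ ⟨g', h'⟩ ⟨hg', hh'⟩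
  rcases le_total (G.dist g g') (H.dist h h') with hle | hle
  · exact visible_prod_of_le (hSG g hg g' hg') (hSH h hh h' hh') hle
  · exact visible_swap (visible_prod_of_le (hSH h hh h' hh') (hSG g hg g' hg') hle)

lemma mu_spec {V : Type*} [Fintype V] (G : SimpleGraph V) :
    ∃ X : Set V, IsMVSet G X ∧ X.ncard = mu G := by
  have hbdd : BddAbove {n | ∃ X : Set V, IsMVSet G X ∧ X.ncard = n} := by
    refine ⟨Fintype.card V, ?_⟩
    rintro n ⟨X, -, rfl⟩
    have := Set.ncard_le_ncard (Set.subset_univ X) Set.finite_univ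
    rwa [Set.ncard_univ, Nat.card_eq_fintype_card] at this
  have hne : {n | ∃ X : Set V, IsMVSet G X ∧ X.ncard = n}.Nonempty :=
    ⟨0, ∅, fun x hx => absurd hx (Set.notMem_empty x), by simp⟩
  exact Nat.sSup_mem hne hbdd

lemma ncard_prod (s : Set α) (t : Set β) : (s ×ˢ t).ncard = s.ncard * t.ncard := by
  rw [← Nat.card_coe_set_eq, Nat.card_congr (Equiv.Set.prod s t), Nat.card_prod,
    Nat.card_coe_set_eq, Nat.card_coe_set_eq]

end Aux4

theorem stmt_12 {α β : Type*} [Fintype α] [Fintype β]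
    (G : SimpleGraph α) (H : SimpleGraph β) (hG : G.Connected) (hH : H.Connected) :
    mu G * mu H ≤ mu (strongProd G H) ∧
    ∀ (SG : Set α) (SH : Set β), IsMVSet G SG → IsMVSet H SH →
      IsMVSet (strongProd G H) (SG ×ˢ SH) := by
  constructor
  · obtain ⟨SG, hSG, hSGc⟩ := mu_spec G
    obtain ⟨SH, hSH, hSHc⟩ := mu_spec H
    have hmv := mvset_prod hSG hSH
    have hcard : (SG ×ˢ SH).ncard = mu G * mu H := by rw [ncard_prod, hSGc, hSHc]
    have hbdd : BddAbove {n | ∃ X : Set (α × β), IsMVSet (strongProd G H) X ∧ X.ncard = n} := by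
      refine ⟨Fintype.card (α × β), ?_⟩
      rintro n ⟨X, -, rfl⟩
      have := Set.ncard_le_ncard (Set.subset_univ X) Set.finite_univ
      rwa [Set.ncard_univ, Nat.card_eq_fintype_card] at this
    exact le_csSup hbdd ⟨SG ×ˢ SH, hmv, hcard⟩
  · exact fun SG SH hSG hSH => mvset_prod hSG hSH
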